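/- (Absorbing Game Construction) If a three-player impartial game G has at least one option and every option G' satisfies o(G') = ∅, then G is absorbing: o(G+H) = ∅ for every game H. -/

import Mathlib

inductive IGame : Type where
  | mk : List IGame → IGame

namespace IGame

def opts : IGame → List IGame
  | mk l => l

theorem sizeOf_lt_of_mem {g G : IGame} (h : g ∈ G.opts) : sizeOf g < sizeOf G := by
  cases G with
  | mk l =>
    have h2 : g ∈ l := h
    have := List.sizeOf_lt_of_mem h2
    simp only [mk.sizeOf_spec]
    omega

def add : IGame → IGame → IGame
  | G, H =>
    mk ((G.opts.attach.map fun g => add g.1 H) ++ (H.opts.attach.map fun h => add G h.1))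
termination_by G H => sizeOf G + sizeOf H
decreasing_by
  · have := sizeOf_lt_of_mem g.2; omega
  · have := sizeOf_lt_of_mem h.2; omega

inductive Player : Type where
  | N | O | P
  deriving DecidableEq

def out : IGame → Player → Prop
  | G, .N => ∃ g : {x // x ∈ G.opts}, out g.1 .P
  | G, .O => ∀ g : {x // x ∈ G.opts}, out g.1 .N
  | G, .P => ∀ g : {x // x ∈ G.opts}, out g.1 .O
termination_by G _ => sizeOf G
decreasing_by
  all_goals exact sizeOf_lt_of_mem g.2

theorem out_N {G : IGame} : out G .N ↔ ∃ g ∈ G.opts, out g .P := by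
  rw [out]
  exact ⟨fun ⟨g, h⟩ => ⟨g.1, g.2, h⟩, fun ⟨g, hm, h⟩ => ⟨⟨g, hm⟩, h⟩⟩

theorem out_O {G : IGame} : out G .O ↔ ∀ g ∈ G.opts, out g .N := by
  rw [out]
  exact ⟨fun h g hm => h ⟨g, hm⟩, fun h g => h g.1 g.2⟩

theorem out_P {G : IGame} : out G .P ↔ ∀ g ∈ G.opts, out g .O := by
  rw [out]
  exact ⟨fun h g hm => h ⟨g, hm⟩, fun h g => h g.1 g.2⟩

def outcome (G : IGame) : Set Player := {p | out G p}

def nim : Nat → IGame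
  | 0 => mk []
  | n+1 => mk ((nim n).opts ++ [nim n])

end IGame

namespace IGame

theorem opts_add (X H : IGame) : (add X H).opts =
    (X.opts.attach.map fun g => add g.1 H) ++ (H.opts.attach.map fun h => add X h.1) := by
  rw [add, opts]

theorem mem_opts_add {y X H : IGame} :
    y ∈ (add X H).opts ↔ (∃ x ∈ X.opts, y = add x H) ∨ (∃ h ∈ H.opts, y = add X h) := by
  rw [opts_add]
  simp only [List.mem_append, List.mem_map, List.mem_attach, true_and, Subtype.exists]
  constructor
  · rintro (⟨a, ha, rfl⟩ | ⟨a, ha, rfl⟩)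
    · exact Or.inl ⟨a, ha, rfl⟩
    · exact Or.inr ⟨a, ha, rfl⟩
  · rintro (⟨a, ha, rfl⟩ | ⟨a, ha, rfl⟩)
    · exact Or.inl ⟨a, ha, rfl⟩
    · exact Or.inr ⟨a, ha, rfl⟩

theorem add_left_mem {x X H : IGame} (h : x ∈ X.opts) : add x H ∈ (add X H).opts :=
  mem_opts_add.2 (Or.inl ⟨x, h, rfl⟩)

theorem add_right_mem {h X H : IGame} (hh : h ∈ H.opts) : add X h ∈ (add X H).opts :=
  mem_opts_add.2 (Or.inr ⟨h, hh, rfl⟩)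



theorem noTriple (X : IGame) : ¬ (out X .N ∧ out X .O ∧ out X .P) := by
  rintro ⟨hN, hO, hP⟩
  obtain ⟨Y, hY, hYP⟩ := out_N.1 hN
  have hlt := sizeOf_lt_of_mem hY
  exact noTriple Y ⟨out_O.1 hO Y hY, out_P.1 hP Y hY, hYP⟩
termination_by sizeOf X

theorem key (x H : IGame) :
    (¬ out x .P → out (add x H) .P → out H .N) ∧
    (¬ out H .P → out (add x H) .P → out x .N) ∧
    (¬ out x .O → out (add x H) .O → out H .N) ∧
    (¬ out H .O → out (add x H) .O → out x .N) ∧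
    (¬ out x .N → out (add x H) .N → out H .N) ∧
    (¬ out H .N → out (add x H) .N → out x .N) := by
  refine ⟨?_, ?_, ?_, ?_, ?_, ?_⟩
  · intro hx hs
    rw [out_P] at hx; push_neg at hx
    obtain ⟨b, hb, hbO⟩ := hx
    have hlt := sizeOf_lt_of_mem hb
    exact (key b H).2.2.1 hbO (out_P.1 hs _ (add_left_mem hb))
  · intro hH hs
    rw [out_P] at hH; push_neg at hH
    obtain ⟨k, hk, hkO⟩ := hH
    have hlt := sizeOf_lt_of_mem hk
    exact (key x k).2.2.2.1 hkO (out_P.1 hs _ (add_right_mem hk))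
  · intro hx hs
    rw [out_O] at hx; push_neg at hx
    obtain ⟨c, hc, hcN⟩ := hx
    have hlt := sizeOf_lt_of_mem hc
    exact (key c H).2.2.2.2.1 hcN (out_O.1 hs _ (add_left_mem hc))
  · intro hH hs
    rw [out_O] at hH; push_neg at hH
    obtain ⟨k, hk, hkN⟩ := hH
    have hlt := sizeOf_lt_of_mem hk
    exact (key x k).2.2.2.2.2 hkN (out_O.1 hs _ (add_right_mem hk))
  · intro hx hs
    have hall : ∀ x' ∈ x.opts, ¬ out x' .P := by
      rw [out_N] at hx; push_neg at hx; exact hx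
    obtain ⟨y, hy, hyP⟩ := out_N.1 hs
    rcases mem_opts_add.1 hy with ⟨x', hx', rfl⟩ | ⟨k, hk, rfl⟩
    · have hlt := sizeOf_lt_of_mem hx'
      exact (key x' H).1 (hall x' hx') hyP
    · by_cases hkP : out k .P
      · exact out_N.2 ⟨k, hk, hkP⟩
      · have hlt := sizeOf_lt_of_mem hk
        exact absurd ((key x k).2.1 hkP hyP) hx
  · intro hH hs
    have hall : ∀ k ∈ H.opts, ¬ out k .P := by
      rw [out_N] at hH; push_neg at hH; exact hH
    obtain ⟨y, hy, hyP⟩ := out_N.1 hs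
    rcases mem_opts_add.1 hy with ⟨x', hx', rfl⟩ | ⟨k, hk, rfl⟩
    · by_cases hxP : out x' .P
      · exact out_N.2 ⟨x', hx', hxP⟩
      · have hlt := sizeOf_lt_of_mem hx'
        exact absurd ((key x' H).1 hxP hyP) hH
    · have hlt := sizeOf_lt_of_mem hk
      exact (key x k).2.1 (hall k hk) hyP
termination_by sizeOf x + sizeOf H
decreasing_by all_goals omega

theorem undet_not_P {g : IGame} (hg : ∀ p, ¬ out g p) (H : IGame) : ¬ out (add g H) .P := by
  intro hP
  obtain ⟨b, hb, hbO⟩ : ∃ b ∈ g.opts, ¬ out b .O := by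
    have := hg .P; rw [out_P] at this; push_neg at this; exact this
  have hHN : out H .N := (key b H).2.2.1 hbO (out_P.1 hP _ (add_left_mem hb))
  obtain ⟨h1, hh1, hh1P⟩ := out_N.1 hHN
  have hgh1O : out (add g h1) .O := out_P.1 hP _ (add_right_mem hh1)
  have hoptN : ∀ h' ∈ h1.opts, out h' .N := fun h' hh' =>
    (key g h').2.2.2.2.1 (hg .N) (out_O.1 hgh1O _ (add_right_mem hh'))
  have hoptO : ∀ h' ∈ h1.opts, out h' .O := out_P.1 hh1P
  have hh1N : out h1 .N := (key g h1).2.2.1 (hg .O) hgh1O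
  obtain ⟨h2, hh2, hh2P⟩ := out_N.1 hh1N
  exact noTriple h2 ⟨hoptN h2 hh2, hoptO h2 hh2, hh2P⟩

theorem out_add_nil {X H : IGame} (hH : H.opts = []) : ∀ p, out (add X H) p ↔ out X p := by
  intro p
  have hmem : ∀ y, y ∈ (add X H).opts ↔ ∃ x ∈ X.opts, y = add x H := by
    intro y; rw [mem_opts_add]; simp [hH]
  cases p with
  | N =>
    rw [out_N, out_N]
    constructor
    · rintro ⟨y, hy, hyP⟩
      obtain ⟨x, hx, rfl⟩ := (hmem y).1 hy
      have hlt := sizeOf_lt_of_mem hx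
      exact ⟨x, hx, (out_add_nil hH .P).1 hyP⟩
    · rintro ⟨x, hx, hxP⟩
      have hlt := sizeOf_lt_of_mem hx
      exact ⟨add x H, add_left_mem hx, (out_add_nil hH .P).2 hxP⟩
  | O =>
    rw [out_O, out_O]
    constructor
    · intro h x hx
      have hlt := sizeOf_lt_of_mem hx
      exact (out_add_nil hH .N).1 (h _ (add_left_mem hx))
    · intro h y hy
      obtain ⟨x, hx, rfl⟩ := (hmem y).1 hy
      have hlt := sizeOf_lt_of_mem hx
      exact (out_add_nil hH .N).2 (h x hx)
  | P =>
    rw [out_P, out_P]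
    constructor
    · intro h x hx
      have hlt := sizeOf_lt_of_mem hx
      exact (out_add_nil hH .O).1 (h _ (add_left_mem hx))
    · intro h y hy
      obtain ⟨x, hx, rfl⟩ := (hmem y).1 hy
      have hlt := sizeOf_lt_of_mem hx
      exact (out_add_nil hH .O).2 (h x hx)
termination_by sizeOf X
decreasing_by all_goals omega

theorem main_aux (G : IGame) (hne : G.opts ≠ [])
    (hopts : ∀ g ∈ G.opts, ∀ p, ¬ out g p) (H : IGame) : ∀ p, ¬ out (add G H) p := by
  intro p hp
  cases p with
  | N =>
    obtain ⟨y, hy, hyP⟩ := out_N.1 hp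
    rcases mem_opts_add.1 hy with ⟨g, hg, rfl⟩ | ⟨h, hh, rfl⟩
    · exact undet_not_P (hopts g hg) H hyP
    · have hlt := sizeOf_lt_of_mem hh
      exact main_aux G hne hopts h .P hyP
  | O =>
    cases hH : H.opts with
    | nil =>
      obtain ⟨g, hg⟩ := List.exists_mem_of_ne_nil _ hne
      exact hopts g hg .N ((out_add_nil hH .N).1 (out_O.1 hp _ (add_left_mem hg)))
    | cons h t =>
      have hh : h ∈ H.opts := by rw [hH]; exact List.mem_cons_self
      have hlt := sizeOf_lt_of_mem hh
      exact main_aux G hne hopts h .N (out_O.1 hp _ (add_right_mem hh))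
  | P =>
    cases hH : H.opts with
    | nil =>
      obtain ⟨g, hg⟩ := List.exists_mem_of_ne_nil _ hne
      exact hopts g hg .O ((out_add_nil hH .O).1 (out_P.1 hp _ (add_left_mem hg)))
    | cons h t =>
      have hh : h ∈ H.opts := by rw [hH]; exact List.mem_cons_self
      have hlt := sizeOf_lt_of_mem hh
      exact main_aux G hne hopts h .O (out_P.1 hp _ (add_right_mem hh))
termination_by sizeOf H
decreasing_by all_goals omega

end IGame

open IGame in
/-- (Absorbing Game Construction) If `G` has at least one option and every
option is undetermined, then `G` is absorbing. -/
theorem absorbing_construction (G : IGame) (hne : G.opts ≠ [])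
    (hopts : ∀ g ∈ G.opts, IGame.outcome g = ∅) :
    ∀ H : IGame, IGame.outcome (IGame.add G H) = ∅ := by
  intro H
  have hopts' : ∀ g ∈ G.opts, ∀ p, ¬ out g p := by
    intro g hg p hp
    exact Set.eq_empty_iff_forall_notMem.1 (hopts g hg) p hp
  exact Set.eq_empty_iff_forall_notMem.2 fun p hp => main_aux G hne hopts' H p hp
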